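/- The double integral ∫_{0 ≤ r ≤ s ≤ 1} log(1−r)·(1/s)·(1/(r(1−r))) dr ds equals −2ζ(3). -/

import Mathlib

open Real Set MeasureTheory intervalIntegral


lemma aux_neg_log_le {x : ℝ} (hx : 0 < x) (hx1 : x ≤ 1) :
    -Real.log x ≤ 2 * (1 - x) / Real.sqrt x := by
  have hs : 0 < Real.sqrt x := Real.sqrt_pos.2 hx
  have h1 : Real.log x = 2 * Real.log (Real.sqrt x) := by
    conv_lhs => rw [← Real.sq_sqrt hx.le]
    rw [Real.log_pow]; push_cast; ring
  have h3 : Real.log (Real.sqrt x)⁻¹ ≤ (Real.sqrt x)⁻¹ - 1 :=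
    Real.log_le_sub_one_of_pos (by positivity)
  rw [Real.log_inv] at h3
  have hsx : x ≤ Real.sqrt x := by
    nlinarith [Real.sq_sqrt hx.le, Real.sqrt_nonneg x, Real.sqrt_le_one.2 hx1]
  rw [h1, le_div_iff₀ hs]
  have h4 : (-Real.log (Real.sqrt x)) * Real.sqrt x ≤ 1 - x := by
    calc (-Real.log (Real.sqrt x)) * Real.sqrt x ≤ ((Real.sqrt x)⁻¹ - 1) * Real.sqrt x :=
          mul_le_mul_of_nonneg_right h3 hs.le
      _ = 1 - Real.sqrt x := by field_simp
      _ ≤ 1 - x := by linarith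
  nlinarith

lemma aux_prod_bound {r : ℝ} (h0 : 0 < r) (h1 : r < 1) :
    (-Real.log r) * (-Real.log (1 - r)) ≤ 4 * Real.sqrt (r * (1 - r)) := by
  have h1' : 0 < 1 - r := by linarith
  have ha : 0 ≤ -Real.log r := by
    simpa using Real.log_nonpos h0.le h1.le
  have hb : -Real.log (1 - r) ≤ 2 * r / Real.sqrt (1 - r) := by
    simpa using aux_neg_log_le h1' (by linarith)
  have ha2 : -Real.log r ≤ 2 * (1 - r) / Real.sqrt r := aux_neg_log_le h0 h1.le
  have hb0 : 0 ≤ 2 * r / Real.sqrt (1 - r) := by positivity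
  calc (-Real.log r) * (-Real.log (1 - r)) ≤ (2 * (1 - r) / Real.sqrt r) * (2 * r / Real.sqrt (1 - r)) := by
        apply mul_le_mul ha2 hb ?_ (by positivity)
        have := Real.log_nonpos h1'.le (by linarith)
        linarith
    _ = 4 * ((r * (1 - r)) / Real.sqrt (r * (1 - r))) := by
        rw [Real.sqrt_mul h0.le]
        have hsr : 0 < Real.sqrt r := Real.sqrt_pos.2 h0
        have hsr' : 0 < Real.sqrt (1 - r) := Real.sqrt_pos.2 h1'
        field_simp
        ring
    _ = 4 * Real.sqrt (r * (1 - r)) := by rw [Real.div_sqrt]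

lemma aux_sqrt_inv_eq {x : ℝ} (hx : 0 ≤ x) : (Real.sqrt x)⁻¹ = x ^ (-(1/2) : ℝ) := by
  rw [Real.rpow_neg hx, Real.sqrt_eq_rpow]

lemma aux_maj_integrable :
    IntegrableOn (fun r : ℝ => (Real.sqrt r)⁻¹ + (Real.sqrt (1 - r))⁻¹) (Ioo 0 1) := by
  have h1 : IntervalIntegrable (fun x : ℝ => x ^ (-(1/2) : ℝ)) volume 0 1 :=
    intervalIntegrable_rpow' (by norm_num)
  have h2 : IntervalIntegrable (fun x : ℝ => (1 - x) ^ (-(1/2) : ℝ)) volume 0 1 := by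
    have := (h1.comp_sub_left 1).symm
    simpa using this
  have h3 : IntervalIntegrable
      (fun x : ℝ => x ^ (-(1/2) : ℝ) + (1 - x) ^ (-(1/2) : ℝ)) volume 0 1 := h1.add h2
  have h4 : IntegrableOn (fun x : ℝ => x ^ (-(1/2) : ℝ) + (1 - x) ^ (-(1/2) : ℝ)) (Ioo 0 1) := by
    have := (intervalIntegrable_iff_integrableOn_Ioo_of_le (by norm_num : (0:ℝ) ≤ 1)).mp h3
    exact this
  apply h4.congr_fun ?_ measurableSet_Ioo
  intro x hx
  simp only
  rw [← aux_sqrt_inv_eq hx.1.le, ← aux_sqrt_inv_eq (by linarith [hx.2] : (0:ℝ) ≤ 1 - x)]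

lemma aux_integrableOn_of_bound {f : ℝ → ℝ} (C : ℝ)
    (hm : AEStronglyMeasurable f (volume.restrict (Ioo 0 1)))
    (hb : ∀ r ∈ Ioo (0:ℝ) 1, |f r| ≤ C * ((Real.sqrt r)⁻¹ + (Real.sqrt (1 - r))⁻¹)) :
    IntegrableOn f (Ioo 0 1) := by
  refine (aux_maj_integrable.const_mul C).mono' hm ?_
  rw [ae_restrict_iff' measurableSet_Ioo]
  exact Filter.Eventually.of_forall fun r hr => hb r hr

lemma aux_one_div_sqrt_bound {r : ℝ} (h0 : 0 < r) (h1 : r < 1) :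
    (Real.sqrt (r * (1 - r)))⁻¹ ≤ 2 * ((Real.sqrt r)⁻¹ + (Real.sqrt (1 - r))⁻¹) := by
  have h1' : 0 < 1 - r := by linarith
  have hs : 0 < Real.sqrt r := Real.sqrt_pos.2 h0
  have ht : 0 < Real.sqrt (1 - r) := Real.sqrt_pos.2 h1'
  rw [Real.sqrt_mul h0.le, mul_inv]
  have hsum : 1 ≤ Real.sqrt r + Real.sqrt (1 - r) := by
    nlinarith [Real.sq_sqrt h0.le, Real.sq_sqrt h1'.le, mul_pos hs ht]
  have key : 1 * ((Real.sqrt r)⁻¹ * (Real.sqrt (1 - r))⁻¹) ≤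
      (Real.sqrt r + Real.sqrt (1 - r)) * ((Real.sqrt r)⁻¹ * (Real.sqrt (1 - r))⁻¹) :=
    mul_le_mul_of_nonneg_right hsum (by positivity)
  calc (Real.sqrt r)⁻¹ * (Real.sqrt (1 - r))⁻¹
      ≤ (Real.sqrt r + Real.sqrt (1 - r)) * ((Real.sqrt r)⁻¹ * (Real.sqrt (1 - r))⁻¹) := by
        simpa using key
    _ = (Real.sqrt (1 - r))⁻¹ + (Real.sqrt r)⁻¹ := by
        field_simp
    _ ≤ 2 * ((Real.sqrt r)⁻¹ + (Real.sqrt (1 - r))⁻¹) := by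
        nlinarith [inv_pos.2 hs, inv_pos.2 ht]
section
variable (k : ℕ)

lemma aux_pow_log_intable :
    IntervalIntegrable (fun x : ℝ => x ^ k * Real.log x) volume 0 1 := by
  rw [intervalIntegrable_iff_integrableOn_Ioo_of_le (by norm_num)]
  apply aux_integrableOn_of_bound 2
  · exact ((measurable_id.pow_const k).mul Real.measurable_log).aestronglyMeasurable
  · intro r hr
    have h0 := hr.1
    have h1 := hr.2
    have hlog : -Real.log r ≤ 2 * (1 - r) / Real.sqrt r := aux_neg_log_le h0 h1.le
    have habs : |r ^ k * Real.log r| ≤ -Real.log r := by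
      rw [abs_mul, abs_of_nonpos (Real.log_nonpos h0.le h1.le)]
      have h2 : |r ^ k| ≤ 1 := by
        rw [abs_of_nonneg (by positivity)]
        exact pow_le_one₀ h0.le h1.le
      nlinarith [Real.log_nonpos h0.le h1.le, abs_nonneg (r ^ k)]
    have hs : 0 < Real.sqrt r := Real.sqrt_pos.2 h0
    have h3 : 2 * (1 - r) / Real.sqrt r ≤ 2 * (Real.sqrt r)⁻¹ := by
      rw [div_le_iff₀ hs]
      have : 2 * (Real.sqrt r)⁻¹ * Real.sqrt r = 2 := by field_simp
      rw [this]; linarith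
    have h4 : (0:ℝ) ≤ (Real.sqrt (1-r))⁻¹ := by positivity
    calc |r ^ k * Real.log r| ≤ -Real.log r := habs
      _ ≤ 2 * (Real.sqrt r)⁻¹ := le_trans hlog h3
      _ ≤ 2 * ((Real.sqrt r)⁻¹ + (Real.sqrt (1 - r))⁻¹) := by nlinarith

lemma aux_integral_pow_mul_log :
    ∫ x in (0:ℝ)..1, x ^ k * Real.log x = -(1 / ((k:ℝ) + 1) ^ 2) := by
  have hk : ((k:ℝ) + 1) ≠ 0 := by positivity
  set F : ℝ → ℝ := fun x => x ^ k * (x * Real.log x) / ((k:ℝ)+1) - x ^ (k+1) / ((k:ℝ)+1)^2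
    with hF
  have hFcont : ContinuousOn F (Icc 0 1) := by
    apply Continuous.continuousOn
    exact (((continuous_pow k).mul Real.continuous_mul_log).div_const _).sub
      ((continuous_pow (k+1)).div_const _)
  have hFderiv : ∀ x ∈ Ioo (0:ℝ) 1, HasDerivWithinAt F (x ^ k * Real.log x) (Ioi x) x := by
    intro x hx
    have hx0 : x ≠ 0 := ne_of_gt hx.1
    have hFeq : F = fun x => x ^ (k+1) * Real.log x / ((k:ℝ)+1) - x ^ (k+1) / ((k:ℝ)+1)^2 := by
      funext y; rw [hF]; simp only [pow_succ]; ring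
    rw [hFeq]
    have h1 : HasDerivAt (fun y : ℝ => y ^ (k+1) * Real.log y)
        ((↑(k+1) * x ^ k) * Real.log x + x ^ (k+1) * x⁻¹) x :=
      (hasDerivAt_pow (k+1) x).mul (Real.hasDerivAt_log hx0)
    have h2 : HasDerivAt (fun y : ℝ => y ^ (k+1) / ((k:ℝ)+1)^2)
        ((↑(k+1) * x ^ k) / ((k:ℝ)+1)^2) x := (hasDerivAt_pow (k+1) x).div_const _
    have h3 := (h1.div_const ((k:ℝ)+1)).sub h2
    have : (↑(k+1) * x ^ k * Real.log x + x ^ (k+1) * x⁻¹) / ((k:ℝ)+1)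
        - ↑(k+1) * x ^ k / ((k:ℝ)+1)^2 = x ^ k * Real.log x := by
      push_cast
      field_simp
      ring
    rw [this] at h3
    exact h3.hasDerivWithinAt
  have := intervalIntegral.integral_eq_sub_of_hasDeriv_right_of_le (by norm_num : (0:ℝ) ≤ 1)
    hFcont hFderiv (aux_pow_log_intable k)
  rw [this, hF]
  norm_num
end

section
variable (k : ℕ)

lemma aux_intF :
    ∫ r in Ioo (0:ℝ) 1, (-Real.log r) * r ^ k / ((k:ℝ) + 1) = 1 / ((k:ℝ) + 1) ^ 3 := by
  have hk : ((k:ℝ) + 1) ≠ 0 := by positivity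
  have h1 : ∫ r in Ioo (0:ℝ) 1, (-Real.log r) * r ^ k / ((k:ℝ) + 1)
      = ∫ r in (0:ℝ)..1, (-Real.log r) * r ^ k / ((k:ℝ) + 1) := by
    rw [intervalIntegral.integral_of_le (by norm_num : (0:ℝ) ≤ 1),
      MeasureTheory.integral_Ioc_eq_integral_Ioo]
  rw [h1]
  have h2 : ∀ r : ℝ, (-Real.log r) * r ^ k / ((k:ℝ) + 1)
      = -(r ^ k * Real.log r) / ((k:ℝ)+1) := fun r => by ring
  simp_rw [h2, intervalIntegral.integral_div, intervalIntegral.integral_neg,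
    aux_integral_pow_mul_log k]
  field_simp
end
lemma aux_summable : Summable (fun k : ℕ => 1 / ((k:ℝ) + 1) ^ 3) := by
  have h : Summable (fun n : ℕ => 1 / (n:ℝ) ^ 3) :=
    Real.summable_one_div_nat_pow.mpr (by norm_num)
  have h2 := (summable_nat_add_iff 1).mpr h
  refine h2.congr fun n => ?_
  push_cast
  ring

lemma aux_P1 : ∫ r in Ioo (0:ℝ) 1, (-Real.log r) * (-Real.log (1 - r)) / r
    = ∑' k : ℕ, 1 / ((k:ℝ) + 1) ^ 3 := by
  set μ := volume.restrict (Ioo (0:ℝ) 1) with hμ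
  set F : ℕ → ℝ → ℝ := fun k r => (-Real.log r) * r ^ k / ((k:ℝ) + 1) with hFdef
  have hFint : ∀ k, Integrable (F k) μ := by
    intro k
    have h1 : IntegrableOn (fun r : ℝ => -(r ^ k * Real.log r) / ((k:ℝ) + 1)) (Ioo 0 1) := by
      have := (intervalIntegrable_iff_integrableOn_Ioo_of_le
        (by norm_num : (0:ℝ) ≤ 1)).mp (aux_pow_log_intable k)
      exact (this.neg).div_const _
    refine h1.congr_fun (fun r _ => by simp only [hFdef]; ring) measurableSet_Ioo
  have hnorm : ∀ k, ∫ r, ‖F k r‖ ∂μ = 1 / ((k:ℝ) + 1) ^ 3 := by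
    intro k
    rw [← aux_intF k]
    refine setIntegral_congr_fun measurableSet_Ioo fun r hr => ?_
    simp only [hFdef]
    rw [Real.norm_eq_abs, abs_of_nonneg]
    have hl : 0 ≤ -Real.log r := by
      simpa using Real.log_nonpos hr.1.le hr.2.le
    exact div_nonneg (mul_nonneg hl (pow_nonneg hr.1.le k)) (by positivity)
  have hsum : Summable fun k => ∫ r, ‖F k r‖ ∂μ := by
    simp_rw [hnorm]; exact aux_summable
  have key := MeasureTheory.integral_tsum_of_summable_integral_norm hFint hsum
  have hpt : ∀ r ∈ Ioo (0:ℝ) 1, (∑' k, F k r) = (-Real.log r) * (-Real.log (1 - r)) / r := by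
    intro r hr
    have habs : |r| < 1 := by rw [abs_of_nonneg hr.1.le]; exact hr.2
    have h := (Real.hasSum_pow_div_log_of_abs_lt_one habs).mul_left ((-Real.log r) / r)
    have h3 : (fun n : ℕ => (-Real.log r) / r * (r ^ (n + 1) / ((n:ℝ) + 1))) = fun n => F n r := by
      funext n
      simp only [hFdef]
      have hr0 : r ≠ 0 := ne_of_gt hr.1
      rw [pow_succ]
      field_simp
    rw [h3] at h
    rw [h.tsum_eq]
    ring
  calc ∫ r in Ioo (0:ℝ) 1, (-Real.log r) * (-Real.log (1 - r)) / r
      = ∫ r, (∑' k, F k r) ∂μ :=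
        (setIntegral_congr_fun measurableSet_Ioo fun r hr => (hpt r hr).symm)
    _ = ∑' k, ∫ r, F k r ∂μ := key.symm
    _ = ∑' k : ℕ, 1 / ((k:ℝ) + 1) ^ 3 := tsum_congr fun k => aux_intF k
lemma aux_P2 : ∫ r in Ioo (0:ℝ) 1, (-Real.log r) * (-Real.log (1 - r)) / (1 - r)
    = ∑' k : ℕ, 1 / ((k:ℝ) + 1) ^ 3 := by
  have h := intervalIntegral.integral_comp_sub_left (a := (0:ℝ)) (b := 1)
    (fun u => (-Real.log (1 - u)) * (-Real.log u) / u) 1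
  simp only [sub_sub_cancel, sub_zero, sub_self] at h
  rw [← MeasureTheory.integral_Ioc_eq_integral_Ioo,
    ← intervalIntegral.integral_of_le (by norm_num : (0:ℝ) ≤ 1), h,
    intervalIntegral.integral_congr
      (g := fun x : ℝ => (-Real.log x) * (-Real.log (1 - x)) / x)
      (fun x _ => by ring),
    intervalIntegral.integral_of_le (by norm_num : (0:ℝ) ≤ 1),
    MeasureTheory.integral_Ioc_eq_integral_Ioo]
  exact aux_P1

lemma aux_sqrt_div {x : ℝ} (hx : 0 < x) : Real.sqrt x / x = (Real.sqrt x)⁻¹ := by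
  have hs : Real.sqrt x ≠ 0 := ne_of_gt (Real.sqrt_pos.2 hx)
  rw [← Real.mul_self_sqrt hx.le]
  field_simp
  rw [Real.sqrt_sq (Real.sqrt_nonneg x)]

lemma aux_I1_integrable :
    IntegrableOn (fun r : ℝ => (-Real.log r) * (-Real.log (1 - r)) / r) (Ioo 0 1) := by
  apply aux_integrableOn_of_bound 4
  · apply Measurable.aestronglyMeasurable
    exact ((Real.measurable_log.neg).mul
      ((Real.measurable_log.comp (measurable_const.sub measurable_id)).neg)).div measurable_id
  · intro r hr
    obtain ⟨h0, h1⟩ := hr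
    have h1' : (0:ℝ) < 1 - r := by linarith
    have hln : 0 ≤ -Real.log r := by simpa using Real.log_nonpos h0.le h1.le
    have hln' : 0 ≤ -Real.log (1 - r) := by simpa using Real.log_nonpos h1'.le (by linarith)
    rw [abs_of_nonneg (by positivity)]
    have hb := aux_prod_bound h0 h1
    have hs : 0 < Real.sqrt r := Real.sqrt_pos.2 h0
    calc (-Real.log r) * (-Real.log (1 - r)) / r ≤ 4 * Real.sqrt (r * (1 - r)) / r := by
          gcongr
      _ ≤ 4 * Real.sqrt r / r := by
          gcongr 4 * ?_ / r
          exact Real.sqrt_le_sqrt (by nlinarith)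
      _ = 4 * (Real.sqrt r)⁻¹ := by
          rw [mul_div_assoc, aux_sqrt_div h0]
      _ ≤ 4 * ((Real.sqrt r)⁻¹ + (Real.sqrt (1 - r))⁻¹) := by
          have : (0:ℝ) ≤ (Real.sqrt (1 - r))⁻¹ := by positivity
          nlinarith
lemma aux_I2_integrable :
    IntegrableOn (fun r : ℝ => (-Real.log r) * (-Real.log (1 - r)) / (1 - r)) (Ioo 0 1) := by
  apply aux_integrableOn_of_bound 4
  · apply Measurable.aestronglyMeasurable
    exact ((Real.measurable_log.neg).mul
      ((Real.measurable_log.comp (measurable_const.sub measurable_id)).neg)).div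
      (measurable_const.sub measurable_id)
  · intro r hr
    obtain ⟨h0, h1⟩ := hr
    have h1' : (0:ℝ) < 1 - r := by linarith
    have hln : 0 ≤ -Real.log r := by simpa using Real.log_nonpos h0.le h1.le
    have hln' : 0 ≤ -Real.log (1 - r) := by simpa using Real.log_nonpos h1'.le (by linarith)
    rw [abs_of_nonneg (by positivity)]
    have hb := aux_prod_bound h0 h1
    calc (-Real.log r) * (-Real.log (1 - r)) / (1 - r)
        ≤ 4 * Real.sqrt (r * (1 - r)) / (1 - r) := by gcongr
      _ ≤ 4 * Real.sqrt (1 - r) / (1 - r) := by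
          gcongr 4 * ?_ / (1 - r)
          exact Real.sqrt_le_sqrt (by nlinarith)
      _ = 4 * (Real.sqrt (1 - r))⁻¹ := by
          rw [mul_div_assoc, aux_sqrt_div h1']
      _ ≤ 4 * ((Real.sqrt r)⁻¹ + (Real.sqrt (1 - r))⁻¹) := by
          have : (0:ℝ) ≤ (Real.sqrt r)⁻¹ := by positivity
          nlinarith

lemma aux_inv_int {r : ℝ} (hr : r ∈ Ioo (0:ℝ) 1) (c : ℝ) :
    ∫ s in Ioc (0:ℝ) 1, Set.indicator (Ici r) (fun s => c / s) s = c * (-Real.log r) := by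
  rw [MeasureTheory.integral_indicator measurableSet_Ici,
      MeasureTheory.Measure.restrict_restrict measurableSet_Ici]
  have hset : Ici r ∩ Ioc (0:ℝ) 1 = Icc r 1 := by
    ext x
    simp only [mem_inter_iff, mem_Ici, mem_Ioc, mem_Icc]
    constructor
    · rintro ⟨ha, _, hc⟩; exact ⟨ha, hc⟩
    · rintro ⟨ha, hb⟩; exact ⟨ha, lt_of_lt_of_le hr.1 ha, hb⟩
  rw [hset, MeasureTheory.integral_Icc_eq_integral_Ioc,
    ← intervalIntegral.integral_of_le hr.2.le]
  have : (fun s : ℝ => c / s) = fun s : ℝ => c * (1 / s) := by funext s; ring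
  rw [this, intervalIntegral.integral_const_mul,
    integral_one_div (notMem_uIcc_of_lt hr.1 (by norm_num)), Real.log_div one_ne_zero
      (ne_of_gt hr.1), Real.log_one]
  ring

/-- The double integral `∫_{0 ≤ r ≤ s ≤ 1} log(1−r)·(1/s)·(1/(r(1−r))) dr ds`
equals `−2ζ(3)`. -/
theorem double_integral_eq_neg_two_zeta_three :
    (∫ s in (0:ℝ)..1, ∫ r in (0:ℝ)..s,
        Real.log (1 - r) * (1 / s) * (1 / (r * (1 - r))))
      = -2 * ∑' k : ℕ, 1 / ((k : ℝ) + 1) ^ 3 := by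
  set μ := volume.restrict (Ioc (0:ℝ) 1) with hμ
  set f : ℝ → ℝ → ℝ :=
    fun s r => if r ≤ s then Real.log (1 - r) * (1 / s) * (1 / (r * (1 - r))) else 0 with hf
  have hfmeas : Measurable (Function.uncurry f) := by
    have huf : Function.uncurry f = fun p : ℝ × ℝ =>
        if p.2 ≤ p.1 then Real.log (1 - p.2) * (1 / p.1) * (1 / (p.2 * (1 - p.2))) else 0 := rfl
    rw [huf]
    apply Measurable.ite (measurableSet_le measurable_snd measurable_fst) ?_ measurable_const
    exact ((Real.measurable_log.comp (measurable_const.sub measurable_snd)).mul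
        (measurable_const.div measurable_fst)).mul
      (measurable_const.div (measurable_snd.mul (measurable_const.sub measurable_snd)))
  have hae : ∀ᵐ r ∂μ, r ∈ Ioo (0:ℝ) 1 := by
    rw [hμ, MeasureTheory.ae_restrict_iff' measurableSet_Ioc, MeasureTheory.ae_iff]
    refine measure_mono_null ?_ (measure_singleton (1:ℝ))
    intro x hx
    simp only [Set.mem_setOf_eq, Classical.not_imp, mem_Ioc, mem_Ioo, not_and, not_lt] at hx
    obtain ⟨⟨hx1, hx2⟩, hx3⟩ := hx
    simp [le_antisymm hx2 (hx3 hx1)]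
  have hLnorm : ∀ r ∈ Ioo (0:ℝ) 1, (fun s => ‖f s r‖)
      = Set.indicator (Ici r) (fun s => ((-Real.log (1 - r)) * (1 / (r * (1 - r)))) / s) := by
    intro r hr
    funext s
    simp only [hf, Set.indicator_apply, mem_Ici]
    by_cases hrs : r ≤ s
    · rw [if_pos hrs, if_pos hrs]
      have hs0 : 0 < s := lt_of_lt_of_le hr.1 hrs
      have h1' : (0:ℝ) < 1 - r := by linarith [hr.2]
      have hlog : Real.log (1 - r) ≤ 0 := Real.log_nonpos h1'.le (by linarith [hr.1])
      have h0r : (0:ℝ) < r := hr.1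
      rw [Real.norm_eq_abs, abs_mul, abs_mul, abs_of_nonpos hlog,
        abs_of_nonneg (by positivity : (0:ℝ) ≤ 1 / s),
        abs_of_nonneg (by positivity : (0:ℝ) ≤ 1 / (r * (1 - r)))]
      ring
    · rw [if_neg hrs, if_neg hrs, norm_zero]
  have hbound : ∀ r ∈ Ioo (0:ℝ) 1,
      ((-Real.log (1 - r)) * (1 / (r * (1 - r)))) * (-Real.log r)
        ≤ 8 * ((Real.sqrt r)⁻¹ + (Real.sqrt (1 - r))⁻¹) := by
    intro r hr
    obtain ⟨h0, h1⟩ := hr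
    have h1' : (0:ℝ) < 1 - r := by linarith
    have hb := aux_prod_bound h0 h1
    have hq := aux_one_div_sqrt_bound h0 h1
    have hrr : 0 < r * (1 - r) := by positivity
    calc (-Real.log (1 - r)) * (1 / (r * (1 - r))) * (-Real.log r)
        = ((-Real.log r) * (-Real.log (1 - r))) / (r * (1 - r)) := by ring
      _ ≤ (4 * Real.sqrt (r * (1 - r))) / (r * (1 - r)) := by gcongr
      _ = 4 * (Real.sqrt (r * (1 - r)))⁻¹ := by rw [mul_div_assoc, aux_sqrt_div hrr]
      _ ≤ 4 * (2 * ((Real.sqrt r)⁻¹ + (Real.sqrt (1 - r))⁻¹)) := by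
          have h4 : (0:ℝ) ≤ 4 := by norm_num
          nlinarith
      _ = 8 * ((Real.sqrt r)⁻¹ + (Real.sqrt (1 - r))⁻¹) := by ring
  have hint : Integrable (Function.uncurry f) (μ.prod μ) := by
    rw [MeasureTheory.integrable_prod_iff' hfmeas.aestronglyMeasurable]
    constructor
    · filter_upwards [hae] with r hr
      show Integrable (fun s => f s r) μ
      have h0r : (0:ℝ) < r := hr.1
      have h1' : (0:ℝ) < 1 - r := by linarith [hr.2]
      set c := (-Real.log (1 - r)) * (1 / (r * (1 - r))) with hc
      have hc0 : 0 ≤ c := by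
        have : 0 ≤ -Real.log (1 - r) := by
          simpa using Real.log_nonpos h1'.le (by linarith [hr.1])
        exact mul_nonneg this (by positivity)
      refine MeasureTheory.Integrable.mono' (g := fun _ => c / r)
        (MeasureTheory.integrableOn_const measure_Ioc_lt_top.ne) ?_ ?_
      · apply Measurable.aestronglyMeasurable
        have : (fun s => f s r) = fun s =>
            if r ≤ s then Real.log (1 - r) * (1 / s) * (1 / (r * (1 - r))) else 0 := rfl
        rw [this]
        apply Measurable.ite (measurableSet_le measurable_const measurable_id)
          ?_ measurable_const
        exact (measurable_const.mul (measurable_const.div measurable_id)).mul measurable_const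
      · rw [MeasureTheory.ae_restrict_iff' measurableSet_Ioc]
        refine Filter.Eventually.of_forall fun s hs => ?_
        have := congrFun (hLnorm r hr) s
        rw [this]
        rw [Set.indicator_apply]
        by_cases hrs : s ∈ Ici r
        · rw [if_pos hrs, ← hc]
          exact div_le_div_of_nonneg_left hc0 h0r hrs
        · rw [if_neg hrs]
          positivity
    · refine MeasureTheory.Integrable.mono'
        (g := fun r => 8 * ((Real.sqrt r)⁻¹ + (Real.sqrt (1 - r))⁻¹)) ?_ ?_ ?_
      · have h8 : IntegrableOn (fun x : ℝ => 8 * ((Real.sqrt x)⁻¹ + (Real.sqrt (1 - x))⁻¹))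
            (Ioo 0 1) volume := aux_maj_integrable.const_mul 8
        exact h8.congr_set_ae (MeasureTheory.Ioo_ae_eq_Ioc (a := (0:ℝ)) (b := 1)).symm
      · exact ((hfmeas.norm).stronglyMeasurable.integral_prod_left').aestronglyMeasurable
      · filter_upwards [hae] with r hr
        show ‖∫ s, ‖f s r‖ ∂μ‖ ≤ 8 * ((Real.sqrt r)⁻¹ + (Real.sqrt (1 - r))⁻¹)
        have heq : (∫ s, ‖f s r‖ ∂μ)
            = ((-Real.log (1 - r)) * (1 / (r * (1 - r)))) * (-Real.log r) := by
          rw [hLnorm r hr, hμ]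
          exact aux_inv_int hr _
        have hnn : 0 ≤ ∫ s, ‖f s r‖ ∂μ :=
          MeasureTheory.integral_nonneg fun s => norm_nonneg _
        rw [Real.norm_eq_abs, abs_of_nonneg hnn, heq]
        exact hbound r hr
  have step1 : (∫ s in (0:ℝ)..1, ∫ r in (0:ℝ)..s,
        Real.log (1 - r) * (1 / s) * (1 / (r * (1 - r))))
      = ∫ s, (∫ r, f s r ∂μ) ∂μ := by
    rw [hμ, intervalIntegral.integral_of_le (by norm_num : (0:ℝ) ≤ 1)]
    refine setIntegral_congr_fun measurableSet_Ioc fun s hs => ?_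
    rw [intervalIntegral.integral_of_le hs.1.le]
    have hind : (fun r => f s r) = Set.indicator (Iic s)
        (fun r => Real.log (1 - r) * (1 / s) * (1 / (r * (1 - r)))) := by
      funext r
      simp [hf, Set.indicator_apply, mem_Iic]
    rw [hind, MeasureTheory.integral_indicator measurableSet_Iic,
      MeasureTheory.Measure.restrict_restrict measurableSet_Iic]
    congr 1
    rw [show Iic s ∩ Ioc (0:ℝ) 1 = Ioc 0 s by
      ext x
      simp only [mem_inter_iff, mem_Iic, mem_Ioc]
      constructor
      · rintro ⟨ha, hb, _⟩; exact ⟨hb, ha⟩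
      · rintro ⟨ha, hb⟩; exact ⟨hb, ha, le_trans hb hs.2⟩]
  have step3 : (∫ r, (∫ s, f s r ∂μ) ∂μ)
      = ∫ r in Ioc (0:ℝ) 1, (Real.log (1 - r) * (1 / (r * (1 - r)))) * (-Real.log r) := by
    rw [hμ]
    refine setIntegral_congr_fun measurableSet_Ioc fun r hr => ?_
    by_cases hr1 : r = 1
    · subst hr1
      have : (fun s => f s 1) = fun _ => (0:ℝ) := by
        funext s
        simp [hf, sub_self, Real.log_zero]
      rw [this]
      simp [Real.log_zero, Real.log_one]
    · have hr' : r ∈ Ioo (0:ℝ) 1 := ⟨hr.1, lt_of_le_of_ne hr.2 hr1⟩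
      have hind : (fun s => f s r) = Set.indicator (Ici r)
          (fun s => (Real.log (1 - r) * (1 / (r * (1 - r)))) / s) := by
        funext s
        simp only [hf, Set.indicator_apply, mem_Ici]
        by_cases hrs : r ≤ s
        · rw [if_pos hrs, if_pos hrs]; ring
        · rw [if_neg hrs, if_neg hrs]
      rw [hind, aux_inv_int hr' _]
  rw [step1, MeasureTheory.integral_integral_swap hint, step3,
    MeasureTheory.integral_Ioc_eq_integral_Ioo]
  have hsplit : ∀ r ∈ Ioo (0:ℝ) 1,
      (Real.log (1 - r) * (1 / (r * (1 - r)))) * (-Real.log r)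
        = -(((-Real.log r) * (-Real.log (1 - r)) / r)
            + ((-Real.log r) * (-Real.log (1 - r)) / (1 - r))) := by
    intro r hr
    have h0 : r ≠ 0 := ne_of_gt hr.1
    have h1 : (1:ℝ) - r ≠ 0 := by
      have := hr.2; intro h; rw [sub_eq_zero] at h; exact absurd h.symm (ne_of_lt this)
    field_simp
    ring
  rw [setIntegral_congr_fun measurableSet_Ioo hsplit, MeasureTheory.integral_neg,
    MeasureTheory.integral_add aux_I1_integrable aux_I2_integrable, aux_P1, aux_P2]
  ring
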